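/- (Attainability of the upper bound.) Let Y be binary (K = 2), J ≥ 2, and fix x ∈ {0,…,J−1}. Let a(t,x',y) > 0 for all t,y ∈ {0,1} and x' ∈ {0,…,J−1}, and b(t,y) ≥ 0 for all t,y ∈ {0,1}, with Σ_{t,x',y} a(t,x',y) + Σ_{t,y} b(t,y) = 1. Then there exists a joint distribution p of (T,X,Y,M) whose observed data matches these values, i.e. p(t,x',y,0) = a(t,x',y) for all (t,x',y) and p(t,+,y,1) = b(t,y) for all (t,y), such that P_p(Y=1|T=1,X=x) = (a(1,x,1) + b(1,1))/(a(1,x,0) + a(1,x,1) + b(1,1)) and P_p(Y=1|T=0,X=x) = a(0,x,1)/(a(0,x,0) + a(0,x,1) + b(0,0)). -/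

import Mathlib

/-- Attainability of the upper bound of Theorem 5. Given any feasible observed
data (a, b) with J ≥ 2, there is a joint distribution p matching the observed data whose
subgroup outcome probabilities attain the upper-bound values. -/
theorem mechanism5_upper_bound_attainable (J : ℕ) (hJ : 2 ≤ J) (x : Fin J)
    (a : Fin 2 → Fin J → Fin 2 → ℝ) (b : Fin 2 → Fin 2 → ℝ)
    (ha_pos : ∀ t x' y, 0 < a t x' y)
    (hb_nonneg : ∀ t y, 0 ≤ b t y)
    (hsum : (∑ t, ∑ x', ∑ y, a t x' y) + (∑ t, ∑ y, b t y) = 1) :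
    ∃ p : Fin 2 → Fin J → Fin 2 → Fin 2 → ℝ,
      (∀ t x' y m, 0 ≤ p t x' y m) ∧
      (∑ t, ∑ x', ∑ y, ∑ m, p t x' y m = 1) ∧
      (∀ t x' y, p t x' y 0 = a t x' y) ∧
      (∀ t y, ∑ x', p t x' y 1 = b t y) ∧
      ((∑ m, p 1 x 1 m) / (∑ y, ∑ m, p 1 x y m)
        = (a 1 x 1 + b 1 1) / (a 1 x 0 + a 1 x 1 + b 1 1)) ∧
      ((∑ m, p 0 x 1 m) / (∑ y, ∑ m, p 0 x y m)
        = a 0 x 1 / (a 0 x 0 + a 0 x 1 + b 0 0)) := by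
  obtain ⟨x₂, hx₂⟩ : ∃ x₂ : Fin J, x₂ ≠ x :=
    Fintype.exists_ne_of_one_lt_card (by rw [Fintype.card_fin]; omega) x
  set c : Fin 2 → Fin 2 → Fin J := fun t y => if t = y then x else x₂ with hc
  refine ⟨fun t x' y m => if m = 0 then a t x' y else (if x' = c t y then b t y else 0),
    ?_, ?_, ?_, ?_, ?_, ?_⟩
  · intro t x' y m
    by_cases hm : m = 0
    · simp only [hm, if_pos]
      exact (ha_pos t x' y).le
    · simp only [hm, if_neg, if_false]
      split
      · exact hb_nonneg t y
      · exact le_refl 0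
  · have h1 : ∀ t y : Fin 2, (∑ x' : Fin J, if x' = c t y then b t y else 0) = b t y := by
      intro t y
      simp [Finset.sum_ite_eq']
    calc (∑ t, ∑ x', ∑ y, ∑ m : Fin 2,
          if m = 0 then a t x' y else (if x' = c t y then b t y else 0))
        = (∑ t, ∑ x', ∑ y, (a t x' y + if x' = c t y then b t y else 0)) := by
          simp [Fin.sum_univ_two]
      _ = (∑ t, ∑ x', ∑ y, a t x' y) + (∑ t, ∑ x', ∑ y : Fin 2, if x' = c t y then b t y else 0) := by
          simp [Finset.sum_add_distrib]
      _ = (∑ t, ∑ x', ∑ y, a t x' y) + (∑ t, ∑ y, b t y) := by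
          congr 1
          refine Finset.sum_congr rfl fun t _ => ?_
          rw [Finset.sum_comm]
          exact Finset.sum_congr rfl fun y _ => h1 t y
      _ = 1 := hsum
  · intro t x' y; simp
  · intro t y; simp [Finset.sum_ite_eq']
  · have hc11 : c 1 1 = x := by simp [hc]
    have hc10 : c 1 0 = x₂ := by simp [hc]
    simp [Fin.sum_univ_two, hc11, hc10, Ne.symm hx₂]
    ring_nf
  · have hc00 : c 0 0 = x := by simp [hc]
    have hc01 : c 0 1 = x₂ := by simp [hc]
    simp [Fin.sum_univ_two, hc00, hc01, Ne.symm hx₂]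
    ring_nf
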